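/- Let G, K, KL, KP ∈ ℚ[[s,u,v,w]] and assume: (i) K = 3G_v − v·KL − ((1/2)v² + w)·KP − (G_s·(L G) + G_u·(P G)) (equation (K) of Proposition 3.7), and (ii) G_{vs} = G_{us} − G_u + (1/2)(G_{ss}·(L G_s) + G_{us}·(P G_s)) (equation (10) of the paper). Then K_s − ( 3(G_{us} − G_u + (1/2)G_{ss}²) − 2G_s·G_{ss} ) lies in the ideal of ℚ[[s,u,v,w]] generated by v and w; equivalently, after setting v = w = 0, K_s = 3(G_{us} − G_u + (1/2)G_{ss}²) − ∂/∂s (G_s²). (This is the paper's remark that its cusp equation specialises, modulo (v,w), to Pandharipande's recursion for cuspidal plane rational curves through points.) -/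

import Mathlib

/-- Formal partial derivative of a multivariate power series with respect to the `i`-th
variable: the coefficient at a monomial `m` is `(m i + 1)` times the coefficient at
`m + eᵢ`. -/
noncomputable def pd {n : ℕ} (i : Fin n) (F : MvPowerSeries (Fin n) ℚ) :
    MvPowerSeries (Fin n) ℚ :=
  fun m => ((m i : ℚ) + 1) * MvPowerSeries.coeff (m + Finsupp.single i 1) F

/-- The operator `L = ∂/∂s + 2v ∂/∂u` on `ℚ[[s,u,v,w]]` (variables `s,u,v,w = 0,1,2,3`). -/
noncomputable def Lop (F : MvPowerSeries (Fin 4) ℚ) : MvPowerSeries (Fin 4) ℚ :=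
  pd 0 F + 2 * MvPowerSeries.X 2 * pd 1 F

/-- The operator `P = 2v ∂/∂s + (2v²+2w) ∂/∂u` on `ℚ[[s,u,v,w]]`. -/
noncomputable def Pop (F : MvPowerSeries (Fin 4) ℚ) : MvPowerSeries (Fin 4) ℚ :=
  2 * MvPowerSeries.X 2 * pd 0 F +
    (2 * MvPowerSeries.X 2 ^ 2 + 2 * MvPowerSeries.X 3) * pd 1 F

open MvPowerSeries

lemma pd_coeff {n : ℕ} (i : Fin n) (F : MvPowerSeries (Fin n) ℚ) (m : Fin n →₀ ℕ) :
    coeff m (pd i F) = ((m i : ℚ) + 1) * coeff (m + Finsupp.single i 1) F := rfl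

lemma pd_add {n : ℕ} (i : Fin n) (F G : MvPowerSeries (Fin n) ℚ) :
    pd i (F + G) = pd i F + pd i G := by
  ext m
  simp [pd_coeff, map_add]; ring

lemma pd_sub {n : ℕ} (i : Fin n) (F G : MvPowerSeries (Fin n) ℚ) :
    pd i (F - G) = pd i F - pd i G := by
  ext m
  simp [pd_coeff, map_sub]; ring

lemma pd_C_mul {n : ℕ} (i : Fin n) (r : ℚ) (F : MvPowerSeries (Fin n) ℚ) :
    pd i (C r * F) = C r * pd i F := by
  ext m
  simp [pd_coeff, coeff_C_mul]; ring

lemma pd_comm {n : ℕ} (i j : Fin n) (F : MvPowerSeries (Fin n) ℚ) :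
    pd i (pd j F) = pd j (pd i F) := by
  ext m
  simp only [pd_coeff, Finsupp.add_apply, Finsupp.single_apply]
  rw [add_right_comm m (Finsupp.single j 1) (Finsupp.single i 1)]
  by_cases hij : i = j
  · subst hij; simp only [if_pos rfl]
  · simp [hij, Ne.symm hij]; ring

lemma pd_X_mul {n : ℕ} (i j : Fin n) (h : j ≠ i) (F : MvPowerSeries (Fin n) ℚ) :
    pd i (X j * F) = X j * pd i F := by
  ext m
  rw [pd_coeff]
  rw [show (X j : MvPowerSeries (Fin n) ℚ) = monomial (Finsupp.single j 1) 1 from rfl]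
  rw [coeff_monomial_mul, coeff_monomial_mul]
  have hle : Finsupp.single j 1 ≤ m + Finsupp.single i 1 ↔ Finsupp.single j 1 ≤ m := by
    simp [Finsupp.single_le_iff, Finsupp.single_apply, h, Ne.symm h]
  by_cases hc : Finsupp.single j 1 ≤ m
  · have h2 : ((m - Finsupp.single j 1) : Fin n →₀ ℕ) i = m i := by
      simp [Finsupp.tsub_apply, Finsupp.single_apply, h]
    rw [if_pos (hle.mpr hc), if_pos hc, pd_coeff]
    have h1 : (m + Finsupp.single i 1) - Finsupp.single j 1
        = (m - Finsupp.single j 1) + Finsupp.single i 1 := by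
      ext k
      have hm : 1 ≤ m j := by simpa [Finsupp.single_le_iff] using hc
      simp only [Finsupp.tsub_apply, Finsupp.add_apply, Finsupp.single_apply]
      rcases eq_or_ne j k with rfl | hjk
      · simp [Ne.symm h, hm]
      · simp [hjk]
    rw [h1, h2]; ring
  · rw [if_neg (fun hh => hc (hle.mp hh)), if_neg hc, mul_zero]

lemma pd_three_mul {n : ℕ} (i : Fin n) (F : MvPowerSeries (Fin n) ℚ) :
    pd i (3 * F) = 3 * pd i F := by
  have h3 : (3 : MvPowerSeries (Fin n) ℚ) = C 3 := by
    rw [map_ofNat]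
  rw [h3, pd_C_mul]

/-- Let `G, K, KL, KP ∈ ℚ[[s,u,v,w]]` and assume
(i) `K = 3G_v − v·KL − ((1/2)v² + w)·KP − (G_s·(L G) + G_u·(P G))` (equation (K) of
Proposition 3.7 of the paper), and
(ii) `G_{vs} = G_{us} − G_u + (1/2)(G_{ss}·(L G_s) + G_{us}·(P G_s))` (equation (10)).
Then `K_s − (3(G_{us} − G_u + (1/2)G_{ss}²) − ∂/∂s(G_s²))` lies in the ideal of
`ℚ[[s,u,v,w]]` generated by `v` and `w`; i.e. modulo `(v,w)` the cusp equation specialises to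
Pandharipande's recursion for cuspidal plane rational curves through points. -/
theorem cusp_potential_modulo_v_w
    (G K KL KP : MvPowerSeries (Fin 4) ℚ)
    (hK : K = 3 * pd 2 G - MvPowerSeries.X 2 * KL
        - ((MvPowerSeries.C (1 / 2) : MvPowerSeries (Fin 4) ℚ) * MvPowerSeries.X 2 ^ 2 +
            MvPowerSeries.X 3) * KP
        - (pd 0 G * Lop G + pd 1 G * Pop G))
    (hTRR : pd 2 (pd 0 G) = pd 1 (pd 0 G) - pd 1 G
        + (MvPowerSeries.C (1 / 2) : MvPowerSeries (Fin 4) ℚ) *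
            (pd 0 (pd 0 G) * Lop (pd 0 G) + pd 1 (pd 0 G) * Pop (pd 0 G))) :
    pd 0 K -
        (3 * (pd 1 (pd 0 G) - pd 1 G +
            (MvPowerSeries.C (1 / 2) : MvPowerSeries (Fin 4) ℚ) * (pd 0 (pd 0 G)) ^ 2) -
          pd 0 ((pd 0 G) ^ 2)) ∈
      Ideal.span {(MvPowerSeries.X 2 : MvPowerSeries (Fin 4) ℚ), MvPowerSeries.X 3} := by
  set c : MvPowerSeries (Fin 4) ℚ := C (1/2) with hc
  set Gs := pd 0 G
  set Gu := pd 1 G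
  set Gss := pd 0 Gs
  set Gus := pd 1 Gs
  set B1 : MvPowerSeries (Fin 4) ℚ :=
    -KL - c * (X 2 * KP) - 2 * Gs * Gu - 2 * Gu * Gs - 2 * X 2 * Gu ^ 2 with hB1
  set B2 : MvPowerSeries (Fin 4) ℚ := -KP - 2 * Gu ^ 2 with hB2
  set C1 : MvPowerSeries (Fin 4) ℚ :=
    c * (2 * Gss * Gus + 2 * Gus * Gss + 2 * X 2 * Gus ^ 2) with hC1
  set C2 : MvPowerSeries (Fin 4) ℚ := c * (2 * Gus ^ 2) with hC2
  have hKform : K = 3 * pd 2 G - Gs ^ 2 + X 2 * B1 + X 3 * B2 := by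
    rw [hK]; simp only [Lop, Pop, hB1, hB2]; ring
  have h2 : pd 0 K = 3 * pd 0 (pd 2 G) - pd 0 (Gs ^ 2) + X 2 * pd 0 B1 + X 3 * pd 0 B2 := by
    rw [hKform, pd_add, pd_add, pd_sub, pd_X_mul 0 2 (by decide), pd_X_mul 0 3 (by decide),
      pd_three_mul]
  have h4 : pd 0 (pd 2 G) = pd 2 Gs := pd_comm _ _ _
  have h5 : pd 2 Gs = (Gus - Gu + c * Gss ^ 2) + X 2 * C1 + X 3 * C2 := by
    rw [hTRR]; simp only [Lop, Pop, hC1, hC2]; ring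
  rw [Ideal.mem_span_pair]
  exact ⟨pd 0 B1 + 3 * C1, pd 0 B2 + 3 * C2, by rw [h2, h4, h5]; ring⟩
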